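/- If a total map of event structures f : E → E' is rigid, injective on events, and both injective and surjective on configurations (every configuration of E' is the image of a configuration of E and distinct configurations have distinct images), then f is an isomorphism of event structures. -/
import Mathlib


structure EventStructure (E : Type) where
  le : E → E → Prop
  conflict : E → E → Prop
  le_refl : ∀ e, le e e
  le_trans : ∀ {a b c}, le a b → le b c → le a c
  le_antisymm : ∀ {a b}, le a b → le b a → a = b
  finite_causes : ∀ e, {e' | le e' e}.Finite
  conflict_irrefl : ∀ e, ¬ conflict e e
  conflict_symm : ∀ {a b}, conflict a b → conflict b a
  conflict_le : ∀ {a b c}, conflict a b → le b c → conflict a c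

/-- A configuration: consistent and down-closed subset of events. -/
def IsConfig {E : Type} (ES : EventStructure E) (x : Set E) : Prop :=
  (∀ e ∈ x, ∀ e' ∈ x, ¬ ES.conflict e e') ∧
  (∀ e ∈ x, ∀ e', ES.le e' e → e' ∈ x)

/-- A total map of event structures: sends configurations to configurations
and is injective on each configuration. -/
def IsMapES {E E' : Type} (ES : EventStructure E) (ES' : EventStructure E')
    (f : E → E') : Prop :=
  (∀ x, IsConfig ES x → IsConfig ES' (f '' x)) ∧
  (∀ x, IsConfig ES x → ∀ e ∈ x, ∀ e' ∈ x, f e = f e' → e = e')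

/-- A rigid map: preserves causal dependency. -/
def RigidMap {E E' : Type} (ES : EventStructure E) (ES' : EventStructure E')
    (f : E → E') : Prop :=
  ∀ a b, ES.le a b → ES'.le (f a) (f b)

/-- An open map: rigid, with configuration-lifting of extensions. -/
def OpenMapES {E E' : Type} (ES : EventStructure E) (ES' : EventStructure E')
    (f : E → E') : Prop :=
  RigidMap ES ES' f ∧
  ∀ x y, IsConfig ES x → IsConfig ES' y → f '' x ⊆ y →
    ∃ z, IsConfig ES z ∧ x ⊆ z ∧ f '' z = y

theorem rigid_config_bijective_is_iso
    {E E' : Type} (ES : EventStructure E) (ES' : EventStructure E')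
    (f : E → E') (hf : IsMapES ES ES' f)
    (hrigid : RigidMap ES ES' f)
    (hinj : Function.Injective f)
    (hsurj : ∀ y, IsConfig ES' y → ∃ x, IsConfig ES x ∧ f '' x = y)
    (hinjcfg : ∀ x x', IsConfig ES x → IsConfig ES x' → f '' x = f '' x' → x = x') :
    ∃ g : E' → E, IsMapES ES' ES g ∧
      Function.LeftInverse g f ∧ Function.RightInverse g f := by
  -- f is surjective on events: the down-closure of any event is a configuration.
  have hsurjE : Function.Surjective f := by
    intro e'
    have hcfg : IsConfig ES' {a | ES'.le a e'} := by
      constructor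
      · intro a ha b hb hc
        have h1 : ES'.conflict a e' := ES'.conflict_le hc hb
        have h2 : ES'.conflict e' e' := ES'.conflict_le (ES'.conflict_symm h1) ha
        exact ES'.conflict_irrefl e' h2
      · intro a ha b hb
        exact ES'.le_trans hb ha
    obtain ⟨x, hx, hfx⟩ := hsurj _ hcfg
    have he' : e' ∈ f '' x := by
      rw [hfx]; exact ES'.le_refl e'
    obtain ⟨a, _, ha⟩ := he'
    exact ⟨a, ha⟩
  have hbij : Function.Bijective f := ⟨hinj, hsurjE⟩
  let eqv := Equiv.ofBijective f hbij
  refine ⟨eqv.symm, ?_, eqv.symm_apply_apply, eqv.apply_symm_apply⟩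
  constructor
  · intro y hy
    obtain ⟨x, hx, hfx⟩ := hsurj y hy
    have : eqv.symm '' y = x := by
      rw [← hfx]
      ext a
      constructor
      · rintro ⟨b, ⟨c, hc, rfl⟩, rfl⟩
        have : eqv.symm (f c) = c := eqv.symm_apply_apply c
        rwa [this]
      · intro ha
        exact ⟨f a, ⟨a, ha, rfl⟩, eqv.symm_apply_apply a⟩
    rwa [this]
  · intro x _ e _ e' _ h
    exact eqv.symm.injective h
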